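/- If $\rho = \sum_m p_m\, \sigma_m \otimes \tau_m$ is a separable state (with $p_m \geq 0$, $\sigma_m, \tau_m$ positive semidefinite), then its EVM $\chi$ satisfies the PPT criterion: both $\chi \geq 0$ and $\chi^{\Gamma_A} \geq 0$, where $\Gamma_A$ denotes partial transposition on the index pair associated with Alice's operators, i.e., $(\chi^{\Gamma_A})_{(i,j),(k,l)} = \chi_{(k,j),(i,l)}$. -/

import Mathlib

open Matrix
open scoped Kronecker ComplexOrder


lemma psd_trace_ct_mul_self_nonneg {d : Type*} [Fintype d]
    (C : Matrix d d ℂ) : 0 ≤ (Cᴴ * C).trace := by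
  rw [Matrix.trace]
  refine Finset.sum_nonneg fun b _ => ?_
  rw [diag_apply, mul_apply]
  refine Finset.sum_nonneg fun a _ => ?_
  simpa [conjTranspose_apply] using star_mul_self_nonneg (C a b)

open scoped MatrixOrder in
lemma posSemidef_iff_eq_transpose_mul_self {n : Type*} [Fintype n] [DecidableEq n]
    {A : Matrix n n ℂ} : A.PosSemidef ↔ ∃ B : Matrix n n ℂ, A = Bᴴ * B := by
  constructor
  · intro h
    obtain ⟨B, hB⟩ := CStarAlgebra.nonneg_iff_eq_star_mul_self.mp h.nonneg
    exact ⟨B, hB⟩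
  · rintro ⟨B, rfl⟩
    exact posSemidef_conjTranspose_mul_self B

lemma gram_psd {d ι : Type*} [Fintype d] [Fintype ι]
    {σ : Matrix d d ℂ} (hσ : σ.PosSemidef) (A : ι → Matrix d d ℂ) :
    (Matrix.of fun i k : ι => (σ * ((A i)ᴴ * A k)).trace).PosSemidef := by
  classical
  obtain ⟨T, hT⟩ := posSemidef_iff_eq_transpose_mul_self.mp hσ
  have key : ∀ i k, (σ * ((A i)ᴴ * A k)).trace = ((A i * Tᴴ)ᴴ * (A k * Tᴴ)).trace := by
    intro i k
    have h2 : (A i * Tᴴ)ᴴ * (A k * Tᴴ) = T * ((A i)ᴴ * A k) * Tᴴ := by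
      simp [conjTranspose_mul, Matrix.mul_assoc]
    rw [h2, hT, Matrix.mul_assoc Tᴴ, Matrix.trace_mul_comm]
  refine posSemidef_iff_dotProduct_mulVec.mpr ⟨?_, ?_⟩
  · ext i k
    simp only [conjTranspose_apply, of_apply]
    rw [← trace_conjTranspose, conjTranspose_mul, conjTranspose_mul,
      conjTranspose_conjTranspose, hσ.1, trace_mul_comm]
  · intro x
    set C : Matrix d d ℂ := ∑ k, x k • (A k * Tᴴ) with hC
    have h1 : star x ⬝ᵥ (Matrix.of fun i k : ι => (σ * ((A i)ᴴ * A k)).trace) *ᵥ x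
        = (Cᴴ * C).trace := by
      simp only [hC, conjTranspose_sum, conjTranspose_smul, Matrix.sum_mul,
        Matrix.mul_sum, Matrix.smul_mul, Matrix.mul_smul, trace_sum, trace_smul,
        dotProduct, mulVec, of_apply, Pi.star_apply, smul_eq_mul]
      simp only [Finset.mul_sum]
      rw [Finset.sum_comm]
      refine Finset.sum_congr rfl fun i _ => Finset.sum_congr rfl fun k _ => ?_
      rw [key]
      ring
    rw [h1]
    exact psd_trace_ct_mul_self_nonneg C

lemma psd_kron {m n : Type*} [Fintype m] [Fintype n]
    {M : Matrix m m ℂ} {N : Matrix n n ℂ} (hM : M.PosSemidef) (hN : N.PosSemidef) :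
    (M ⊗ₖ N).PosSemidef := by
  classical
  obtain ⟨C, rfl⟩ := posSemidef_iff_eq_transpose_mul_self.mp hM
  obtain ⟨D, rfl⟩ := posSemidef_iff_eq_transpose_mul_self.mp hN
  rw [mul_kronecker_mul]
  have h : Cᴴ ⊗ₖ Dᴴ = (C ⊗ₖ D)ᴴ := by
    ext ⟨a, b⟩ ⟨c, e⟩
    simp only [conjTranspose_apply, kroneckerMap_apply, star_mul']
  rw [h]
  exact posSemidef_conjTranspose_mul_self _

lemma psd_smul {n : Type*} [Fintype n] {M : Matrix n n ℂ} (hM : M.PosSemidef)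
    {p : ℝ} (hp : 0 ≤ p) : ((p : ℂ) • M).PosSemidef := by
  refine posSemidef_iff_dotProduct_mulVec.mpr ⟨?_, ?_⟩
  · unfold Matrix.IsHermitian
    rw [conjTranspose_smul, hM.1]
    congr 1
    simp [RCLike.star_def]
  · intro x
    rw [smul_mulVec, dotProduct_smul, smul_eq_mul]
    exact mul_nonneg (Complex.zero_le_real.mpr hp) (hM.dotProduct_mulVec_nonneg x)

lemma psd_sum {n : Type*} [Fintype n] {N : ℕ} (f : Fin N → Matrix n n ℂ)
    (h : ∀ m, (f m).PosSemidef) : (∑ m, f m).PosSemidef :=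
  Finset.sum_induction f _ (fun _ _ ha hb => ha.add hb) Matrix.PosSemidef.zero
    (fun m _ => h m)

/-- If `ρ = ∑ m, p m • (σ m ⊗ τ m)` is a separable state
(`p m ≥ 0`, `σ m`, `τ m` positive semidefinite), then its EVM `χ` satisfies the
PPT criterion: both `χ ≥ 0` and `χ^{Γ_A} ≥ 0`, where
`(χ^{Γ_A})_{(i,j),(k,l)} = χ_{(k,j),(i,l)}`. -/
theorem evm_separable_ppt
    {dA dB ι κ : Type*} [Fintype dA] [Fintype dB] [Fintype ι] [Fintype κ]
    [DecidableEq dA] [DecidableEq dB]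
    (N : ℕ) (p : Fin N → ℝ) (hp : ∀ m, 0 ≤ p m)
    (σ : Fin N → Matrix dA dA ℂ) (hσ : ∀ m, (σ m).PosSemidef)
    (τ : Fin N → Matrix dB dB ℂ) (hτ : ∀ m, (τ m).PosSemidef)
    (ρ : Matrix (dA × dB) (dA × dB) ℂ)
    (hρ : ρ = ∑ m : Fin N, (p m : ℂ) • (σ m ⊗ₖ τ m))
    (A : ι → Matrix dA dA ℂ) (B : κ → Matrix dB dB ℂ)
    (χ : Matrix (ι × κ) (ι × κ) ℂ)
    (hχ : ∀ i j k l, χ (i, j) (k, l) =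
      (ρ * (((A i)ᴴ * A k) ⊗ₖ ((B j)ᴴ * B l))).trace) :
    χ.PosSemidef ∧
    (Matrix.of fun q r : ι × κ => χ (r.1, q.2) (q.1, r.2)).PosSemidef := by
  set GA : Fin N → Matrix ι ι ℂ :=
    fun m => Matrix.of fun i k : ι => (σ m * ((A i)ᴴ * A k)).trace with hGA
  set GB : Fin N → Matrix κ κ ℂ :=
    fun m => Matrix.of fun j l : κ => (τ m * ((B j)ᴴ * B l)).trace with hGB
  have hterm : ∀ (i k : ι) (j l : κ),
      (ρ * (((A i)ᴴ * A k) ⊗ₖ ((B j)ᴴ * B l))).trace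
        = ∑ m, (p m : ℂ) * (GA m i k * GB m j l) := by
    intro i k j l
    rw [hρ]
    simp only [Matrix.sum_mul, Matrix.smul_mul, trace_sum, trace_smul, smul_eq_mul,
      ← mul_kronecker_mul, trace_kronecker, hGA, hGB, of_apply]
  constructor
  · have hch : χ = ∑ m, (p m : ℂ) • (GA m ⊗ₖ GB m) := by
      ext ⟨i, j⟩ ⟨k, l⟩
      rw [hχ, hterm]
      simp [Matrix.sum_apply, Matrix.smul_apply, kroneckerMap_apply, smul_eq_mul, mul_assoc]
    rw [hch]
    exact psd_sum _ fun m =>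
      psd_smul (psd_kron (gram_psd (hσ m) A) (gram_psd (hτ m) B)) (hp m)
  · have hch2 : (Matrix.of fun q r : ι × κ => χ (r.1, q.2) (q.1, r.2))
        = ∑ m, (p m : ℂ) • ((GA m)ᵀ ⊗ₖ GB m) := by
      ext ⟨i, j⟩ ⟨k, l⟩
      simp only [of_apply]
      rw [hχ, hterm]
      simp [Matrix.sum_apply, Matrix.smul_apply, kroneckerMap_apply, smul_eq_mul, mul_assoc]
    rw [hch2]
    exact psd_sum _ fun m =>
      psd_smul (psd_kron ((gram_psd (hσ m) A).transpose) (gram_psd (hτ m) B)) (hp m)
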